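/- Let L be a positive integer, let r be an integer with 0 ≤ r ≤ L, and let p ∈ [0,1] be a real number. Then ∑_{j=r+1}^{L} binom(L,j) · (binom(j−1,r) / binom(L,r)) · p^{j−r} (1−p)^{L−j} = ∑_{j=1}^{L−r} (j/(j+r)) · binom(L−r,j) · p^{j} (1−p)^{L−r−j}. -/

import Mathlib

lemma key_nat (L r i : ℕ) (hi : 1 ≤ i) (h : i + r ≤ L) :
    (i + r) * (L.choose (i + r) * (i + r - 1).choose r)
      = i * (L.choose r * (L - r).choose i) := by
  obtain ⟨n, rfl⟩ : ∃ n, i = n + 1 := ⟨i - 1, by omega⟩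
  have h1 : n + 1 + r - 1 = n + r := by omega
  rw [h1]
  have hsymm : (n + r).choose r = (n + r).choose n := by
    rw [← Nat.choose_symm (Nat.le_add_left r n)]; congr 1; omega
  have hsucc := Nat.add_one_mul_choose_eq (n + r) n
  have htri := Nat.choose_mul (n := L) (k := n + r + 1) (s := r) (by omega)
  have e1 : n + r + 1 - r = n + 1 := by omega
  rw [e1] at htri
  calc (n + 1 + r) * (L.choose (n + 1 + r) * (n + r).choose r)
      = L.choose (n + r + 1) * ((n + r).succ * (n + r).choose n) := by
        rw [hsymm]; rw [show n + 1 + r = n + r + 1 by omega, Nat.succ_eq_add_one]; ring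
    _ = L.choose (n + r + 1) * ((n + r).succ.choose n.succ * n.succ) := by rw [hsucc]
    _ = (n + 1) * (L.choose (n + r + 1) * (n + r + 1).choose (n + 1)) := by
        simp [Nat.succ_eq_add_one]; ring
    _ = (n + 1) * (L.choose r * (L - r).choose (n + 1)) := by
        congr 1
        rw [show (n + r + 1).choose (n + 1) = (n + r + 1).choose r by
          rw [← Nat.choose_symm (by omega : n + 1 ≤ n + r + 1)]; congr 1; omega]
        exact htri

theorem stmt_1 (L r : ℕ) (hL : 0 < L) (hr : r ≤ L)
    (p : ℝ) (hp0 : 0 ≤ p) (hp1 : p ≤ 1) :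
    ∑ j ∈ Finset.Icc (r + 1) L,
        (L.choose j : ℝ) * ((j - 1).choose r : ℝ) / (L.choose r : ℝ) *
          p ^ (j - r) * (1 - p) ^ (L - j)
      = ∑ j ∈ Finset.Icc 1 (L - r),
          (j : ℝ) / ((j : ℝ) + (r : ℝ)) * ((L - r).choose j : ℝ) *
            p ^ j * (1 - p) ^ (L - r - j) := by
  have hIcc : Finset.Icc (r + 1) L
      = (Finset.Icc 1 (L - r)).map (addRightEmbedding r) := by
    rw [Finset.map_add_right_Icc]
    congr 1 <;> omega
  rw [hIcc, Finset.sum_map]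
  apply Finset.sum_congr rfl
  intro i hi
  simp only [Finset.mem_Icc] at hi
  obtain ⟨hi1, hi2⟩ := hi
  have hir : i + r ≤ L := by omega
  simp only [addRightEmbedding_apply]
  have e1 : i + r - r = i := by omega
  have e2 : L - (i + r) = L - r - i := by omega
  rw [e1, e2]
  have hkey := key_nat L r i hi1 hir
  have hLr : (L.choose r : ℝ) ≠ 0 := by
    exact_mod_cast Nat.choose_pos hr |>.ne'
  have hirR : (i : ℝ) + (r : ℝ) ≠ 0 := by positivity
  have hkeyR : ((i : ℝ) + r) * ((L.choose (i + r) : ℝ) * ((i + r - 1).choose r : ℝ))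
      = (i : ℝ) * ((L.choose r : ℝ) * ((L - r).choose i : ℝ)) := by
    exact_mod_cast congrArg (Nat.cast : ℕ → ℝ) hkey
  field_simp
  linear_combination (p ^ i * (1 - p) ^ (L - r - i)) * hkeyR
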